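/- The equation p^m - q^n = 1, where p and q are primes and m, n > 1, has only one solution, namely 3^2 - 2^3 = 1. -/

import Mathlib

/-- In `ZMod (2^(j+1))`, `2^j ≠ 0`. -/
lemma two_pow_ne_zero (j : ℕ) : ((2^j : ℕ) : ZMod (2^(j+1))) ≠ 0 := by
  intro h0
  rw [ZMod.natCast_eq_zero_iff] at h0
  have hdvd := h0
  have := Nat.le_of_dvd (Nat.pow_pos (n := j) (by norm_num)) hdvd
  exact absurd this (by simp [Nat.pow_lt_pow_succ])

lemma odd_pow_self {N : ℕ} (a : ZMod N) (ha : a^2 = 1) {e : ℕ} (he : Odd e) :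
    a ^ e = a := by
  obtain ⟨t, rfl⟩ := he
  rw [pow_add, pow_mul, ha, one_pow, one_mul, pow_one]

theorem catalan_prime_powers (p q m n : ℕ) (hp : p.Prime) (hq : q.Prime)
    (hm : 1 < m) (hn : 1 < n) (h : p ^ m = q ^ n + 1) :
    p = 3 ∧ m = 2 ∧ q = 2 ∧ n = 3 := by
  have hp2 := hp.two_le
  have hq2 := hq.two_le
  -- one of p, q is 2
  have hq_eq_two : q = 2 := by
    by_contra hq_ne
    have hq_odd : Odd q := hq.odd_of_ne_two hq_ne
    have hp_eq : p = 2 := by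
      by_contra hp_ne
      have hp_odd : Odd p := hp.odd_of_ne_two hp_ne
      have h1 : Odd (p ^ m) := hp_odd.pow
      have h2 : Odd (q ^ n) := hq_odd.pow
      rw [h] at h1
      rcases h2 with ⟨s, hs⟩
      rcases h1 with ⟨t, ht⟩
      omega
    subst hp_eq
    -- 2^m = q^n + 1, q odd
    rcases Nat.even_or_odd n with hne | hno
    · -- n even: q^n ≡ 1 mod 4, so 2^m ≡ 2 mod 4, contradiction with m ≥ 2
      obtain ⟨t, rfl⟩ := hne
      have hq4 : ((q:ℕ) : ZMod 4)^2 = 1 := by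
        obtain ⟨s, hs⟩ := hq_odd
        subst hs
        push_cast
        have h40 : (4 : ZMod 4) = 0 := by decide
        linear_combination (s^2 + s) * h40
      have hcast : ((2^m : ℕ) : ZMod 4) = ((q:ℕ):ZMod 4)^(t+t) + 1 := by
        have := congrArg (fun x : ℕ => (x : ZMod 4)) h
        push_cast at this ⊢
        exact this
      have h0 : ((2^m:ℕ) : ZMod 4) = 0 := by
        rw [ZMod.natCast_eq_zero_iff]
        have : (2:ℕ)^2 ∣ 2^m := pow_dvd_pow 2 hm
        norm_num at this
        exact this
      rw [h0, show t+t = 2*t by ring, pow_mul, hq4, one_pow] at hcast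
      exact absurd hcast (by decide)
    · -- n odd: q + 1 ∣ q^n + 1 = 2^m
      have hdvd : (q + 1 : ℤ) ∣ (q:ℤ)^n + 1 := by
        have := Odd.add_dvd_pow_add_pow (q:ℤ) 1 hno
        simpa using this
      have hdvdN : q + 1 ∣ 2 ^ m := by
        have : (q + 1 : ℤ) ∣ ((2^m : ℕ) : ℤ) := by
          rw [show ((2^m : ℕ) : ℤ) = (q:ℤ)^n + 1 by exact_mod_cast h]
          exact hdvd
        exact_mod_cast this
      obtain ⟨j, hjm, hj⟩ := (Nat.dvd_prime_pow Nat.prime_two).mp hdvdN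
      have hj1 : 1 ≤ j := by
        rcases Nat.eq_zero_or_pos j with rfl | h1
        · simp at hj; omega
        · exact h1
      -- contradiction in ZMod (2^(j+1))
      set N := 2^(j+1) with hN
      have hq_cast : ((q:ℕ) : ZMod N) = (2:ZMod N)^j - 1 := by
        have : ((q + 1 : ℕ) : ZMod N) = ((2^j : ℕ) : ZMod N) := by rw [hj]
        push_cast at this
        linear_combination this
      have hsq : ((q:ℕ) : ZMod N)^2 = 1 := by
        rw [hq_cast]
        have h2j : (2:ZMod N)^(2*j) = 0 := by
          have : ((2^(2*j) : ℕ) : ZMod N) = 0 := by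
            rw [ZMod.natCast_eq_zero_iff]
            exact pow_dvd_pow 2 (by omega)
          push_cast at this; exact this
        have hN0 : (2:ZMod N)^(j+1) = 0 := by
          have : ((2^(j+1) : ℕ) : ZMod N) = 0 := by
            rw [ZMod.natCast_eq_zero_iff]
          push_cast at this; exact this
        have e1 : (2:ZMod N)^(2*j) = ((2:ZMod N)^j)^2 := by ring
        have e2 : (2:ZMod N)^(j+1) = 2 * (2:ZMod N)^j := by ring
        rw [e1] at h2j; rw [e2] at hN0
        ring_nf
        linear_combination h2j - hN0
      have hmj : j < m := by
        have : 2^j < 2^m := by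
          rw [← hj, h]
          calc q + 1 ≤ q^n := by
                have : q^2 ≤ q^n := Nat.pow_le_pow_right (by omega) hn
                nlinarith [sq_nonneg q]
            _ < q^n + 1 := by omega
        exact (Nat.pow_lt_pow_iff_right (by norm_num)).mp this
      -- cast equation h into ZMod N
      have hcast : ((2^m : ℕ) : ZMod N) = ((q:ℕ) : ZMod N)^n + 1 := by
        have := congrArg (fun x : ℕ => (x : ZMod N)) h
        push_cast at this
        push_cast
        exact this
      have h2m : ((2^m : ℕ) : ZMod N) = 0 := by
        rw [ZMod.natCast_eq_zero_iff]
        exact pow_dvd_pow 2 (by omega)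
      rw [h2m, odd_pow_self _ hsq hno, hq_cast] at hcast
      have : ((2^j : ℕ) : ZMod N) = 0 := by push_cast; linear_combination -hcast
      exact two_pow_ne_zero j this
  subst hq_eq_two
  -- now p^m = 2^n + 1
  have hp_ne : p ≠ 2 := by
    rintro rfl
    have h1 : (2:ℕ) ∣ 2^m := dvd_pow_self 2 (by omega)
    have h2 : (2:ℕ) ∣ 2^n := dvd_pow_self 2 (by omega)
    omega
  have hp_odd : Odd p := hp.odd_of_ne_two hp_ne
  have hp3 : 3 ≤ p := by
    rcases hp_odd with ⟨s, hs⟩; omega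
  have hsub : p - 1 ∣ 2^n := by
    have h1 : p - 1 ∣ p^m - 1 := by simpa using Nat.sub_dvd_pow_sub_pow p 1 m
    have h2 : p^m - 1 = 2^n := by rw [h, Nat.add_sub_cancel]
    rwa [h2] at h1
  obtain ⟨j, hjn, hj⟩ := (Nat.dvd_prime_pow Nat.prime_two).mp hsub
  have hj1 : 1 ≤ j := by
    rcases Nat.eq_zero_or_pos j with rfl | h1
    · simp at hj; omega
    · exact h1
  -- m is even
  have hme : Even m := by
    by_contra hmo'
    have hmo : Odd m := Nat.not_even_iff_odd.mp hmo'
    set N := 2^(j+1) with hN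
    have hp_cast : ((p:ℕ) : ZMod N) = (2:ZMod N)^j + 1 := by
      have : ((p : ℕ) : ZMod N) = ((2^j + 1 : ℕ) : ZMod N) := by
        congr 1; omega
      push_cast at this
      exact this
    have h2j0 : (2:ZMod N)^(2*j) = 0 := by
      have : ((2^(2*j) : ℕ) : ZMod N) = 0 := by
        rw [ZMod.natCast_eq_zero_iff]
        exact pow_dvd_pow 2 (by omega)
      push_cast at this; exact this
    have hN0 : (2:ZMod N)^(j+1) = 0 := by
      have : ((2^(j+1) : ℕ) : ZMod N) = 0 := by
        rw [ZMod.natCast_eq_zero_iff]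
      push_cast at this; exact this
    have hsq : ((p:ℕ) : ZMod N)^2 = 1 := by
      rw [hp_cast]
      have e1 : (2:ZMod N)^(2*j) = ((2:ZMod N)^j)^2 := by ring
      have e2 : (2:ZMod N)^(j+1) = 2 * (2:ZMod N)^j := by ring
      rw [e1] at h2j0; rw [e2] at hN0
      linear_combination h2j0 + hN0
    have hmj : j < n := by
      have hlt : 2^j < 2^n := by
        have hpm : p < p^m := by
          calc p < p^2 := by nlinarith
            _ ≤ p^m := Nat.pow_le_pow_right (by omega) hm
        omega
      exact (Nat.pow_lt_pow_iff_right (by norm_num)).mp hlt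
    have hcast : ((p:ℕ) : ZMod N)^m = ((2^n : ℕ) : ZMod N) + 1 := by
      have := congrArg (fun x : ℕ => (x : ZMod N)) h
      push_cast at this ⊢
      exact this
    have h2n0 : ((2^n : ℕ) : ZMod N) = 0 := by
      rw [ZMod.natCast_eq_zero_iff]
      exact pow_dvd_pow 2 (by omega)
    rw [h2n0, odd_pow_self _ hsq hmo, hp_cast] at hcast
    have : ((2^j : ℕ) : ZMod N) = 0 := by push_cast; linear_combination hcast
    exact two_pow_ne_zero j this
  obtain ⟨k, hk⟩ := hme
  have hk1 : 1 ≤ k := by omega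
  have hpk_odd : Odd (p^k) := hp_odd.pow
  have hpk3 : 3 ≤ p^k := by
    calc 3 ≤ p := hp3
      _ = p^1 := (pow_one p).symm
      _ ≤ p^k := Nat.pow_le_pow_right (by omega) hk1
  have hfact : (p^k + 1) * (p^k - 1) = 2^n := by
    have h1 : (p^k)^2 - 1^2 = (p^k + 1) * (p^k - 1) := Nat.sq_sub_sq (p^k) 1
    have h2 : (p^k)^2 = p^m := by rw [← pow_mul]; congr 1; omega
    rw [h2] at h1
    simp only [one_pow] at h1
    rw [← h1, h, Nat.add_sub_cancel]
  obtain ⟨a, han, ha⟩ := (Nat.dvd_prime_pow Nat.prime_two).mp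
    (Dvd.intro_left (p^k + 1) hfact)
  obtain ⟨b, hbn, hb⟩ := (Nat.dvd_prime_pow Nat.prime_two).mp
    (Dvd.intro (p^k - 1) hfact)
  have ha1 : a = 1 := by
    have ha0 : 1 ≤ a := by
      rcases Nat.eq_zero_or_pos a with rfl | h1
      · rcases hpk_odd with ⟨s, hs⟩; simp at ha; omega
      · exact h1
    by_contra ha2'
    have ha2 : 2 ≤ a := by omega
    have h4a : (2:ℕ)^2 ∣ 2^a := pow_dvd_pow 2 ha2
    have hab : 2^b = 2^a + 2 := by omega
    have hb3 : 2^2 < 2^b := by omega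
    have hb2 : 2 ≤ b := le_of_lt ((Nat.pow_lt_pow_iff_right (by norm_num)).mp hb3)
    have h4b : (2:ℕ)^2 ∣ 2^b := pow_dvd_pow 2 hb2
    norm_num at h4a h4b
    omega
  have hpk3' : p^k = 3 := by rw [ha1] at ha; omega
  have hp_eq : p = 3 := by
    have hdvd : p ∣ 3 := hpk3' ▸ dvd_pow_self p (by omega)
    exact (Nat.prime_dvd_prime_iff_eq hp Nat.prime_three).mp hdvd
  have hk_eq : k = 1 := by
    rw [hp_eq] at hpk3'
    have := Nat.pow_right_injective (by norm_num : 2 ≤ 3) (hpk3'.trans (pow_one 3).symm)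
    exact this
  have hm_eq : m = 2 := by omega
  have hn_eq : n = 3 := by
    rw [hp_eq, hm_eq] at h
    have h2n : (2:ℕ)^n = 2^3 := by norm_num at h; omega
    exact Nat.pow_right_injective (le_refl 2) h2n
  exact ⟨hp_eq, hm_eq, rfl, hn_eq⟩
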